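/- Let G be a finite group. At most one Sylow subgroup of G (over all primes, including the trivial Sylow subgroups for primes not dividing |G|) attains the maximum Chermak–Delgado measure of G. -/

import Mathlib

/-- The Chermak–Delgado measure of a subgroup. -/
noncomputable def cdMeasure {G : Type*} [Group G] (H : Subgroup G) : ℕ :=
  Nat.card H * Nat.card (Subgroup.centralizer (H : Set G))

open Subgroup Pointwise

namespace CDaux

variable {G : Type*} [Group G] [Finite G]

lemma card_subgroupOf (H K : Subgroup G) :
    Nat.card (K.subgroupOf H) = Nat.card (H ⊓ K : Subgroup G) :=
  Nat.card_congr
    { toFun := fun x => ⟨x.1.1, Subgroup.mem_inf.mpr ⟨x.1.2, Subgroup.mem_subgroupOf.mp x.2⟩⟩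
      invFun := fun y => ⟨⟨y.1, (Subgroup.mem_inf.mp y.2).1⟩,
        Subgroup.mem_subgroupOf.mpr (Subgroup.mem_inf.mp y.2).2⟩
      left_inv := fun x => rfl
      right_inv := fun y => rfl }

lemma card_quot_eq_card_image (H K : Subgroup G) :
    Nat.card (H ⧸ K.subgroupOf H) =
      Nat.card ((QuotientGroup.mk '' (H : Set G)) : Set (G ⧸ K)) := by
  apply Nat.card_congr
  refine Equiv.ofBijective
    (fun x => Quotient.liftOn' x
      (fun h => (⟨QuotientGroup.mk (h : G), ⟨(h : G), h.2, rfl⟩⟩ :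
        { y : G ⧸ K // y ∈ QuotientGroup.mk '' (H : Set G) }))
      (fun a b hab => Subtype.ext (by
        rw [QuotientGroup.eq]
        have := Subgroup.mem_subgroupOf.mp (QuotientGroup.leftRel_apply.mp hab)
        simpa using this))) ⟨?_, ?_⟩
  · intro x y
    induction x using Quotient.inductionOn' with
    | h a =>
      induction y using Quotient.inductionOn' with
      | h b =>
        intro hxy
        have h2 : (QuotientGroup.mk (a : G) : G ⧸ K) = QuotientGroup.mk (b : G) :=
          congrArg Subtype.val hxy
        apply Quotient.sound'
        rw [QuotientGroup.leftRel_apply]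
        exact Subgroup.mem_subgroupOf.mpr (by simpa using QuotientGroup.eq.mp h2)
  · rintro ⟨y, g, hg, rfl⟩
    exact ⟨Quotient.mk'' (⟨g, hg⟩ : H), rfl⟩

lemma card_inf_mul_card_mul_set (H K : Subgroup G) :
    Nat.card (H ⊓ K : Subgroup G) * Nat.card ((H : Set G) * (K : Set G)) =
      Nat.card H * Nat.card K := by
  rw [Subgroup.card_mul_eq_card_subgroup_mul_card_quotient K (H : Set G),
    ← card_quot_eq_card_image H K, ← card_subgroupOf H K,
    Subgroup.card_eq_card_quotient_mul_card_subgroup (K.subgroupOf H)]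
  ring

lemma centralizer_sup' (H K : Subgroup G) :
    centralizer ((H ⊔ K : Subgroup G) : Set G) =
      centralizer (H : Set G) ⊓ centralizer (K : Set G) := by
  apply le_antisymm
  · exact le_inf (centralizer_le (SetLike.coe_subset_coe.mpr le_sup_left))
      (centralizer_le (SetLike.coe_subset_coe.mpr le_sup_right))
  · rw [le_centralizer_iff]
    exact sup_le (le_centralizer_iff.mp inf_le_left) (le_centralizer_iff.mp inf_le_right)

lemma cdMeasure_bot : cdMeasure (⊥ : Subgroup G) = Nat.card G := by
  have h : centralizer (((⊥ : Subgroup G)) : Set G) = ⊤ :=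
    centralizer_eq_top_iff_subset.mpr
      (by simp only [Subgroup.coe_bot, Set.singleton_subset_iff, SetLike.mem_coe]
          exact one_mem _)
  rw [cdMeasure, h, Subgroup.card_bot, Subgroup.card_top, one_mul]

lemma cdMeasure_pos (H : Subgroup G) : 0 < cdMeasure H :=
  Nat.mul_pos Nat.card_pos Nat.card_pos

lemma sylow_eq_bot {p : ℕ} [hp : Fact p.Prime] (S : Sylow p G)
    (h : cdMeasure (S : Subgroup G) = Nat.card G) : (S : Subgroup G) = ⊥ := by
  by_contra hne
  have hcard : Nat.card (S : Subgroup G) = p ^ (Nat.card G).factorization p :=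
    Sylow.card_eq_multiplicity S
  have hGpos : (0:ℕ) < Nat.card G := Nat.card_pos
  have hprod : p ^ (Nat.card G).factorization p *
      Nat.card (centralizer ((S : Subgroup G) : Set G)) = Nat.card G := by
    rw [← hcard]; exact h
  have hC : Nat.card G / p ^ (Nat.card G).factorization p =
      Nat.card (centralizer ((S : Subgroup G) : Set G)) :=
    Nat.div_eq_of_eq_mul_left (pow_pos hp.out.pos _) (by rw [mul_comm]; exact hprod.symm)
  have hnd : ¬ p ∣ Nat.card (centralizer ((S : Subgroup G) : Set G)) := by
    rw [← hC]; exact Nat.not_dvd_ordCompl hp.out hGpos.ne'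
  haveI : Nontrivial (S : Subgroup G) := (Subgroup.nontrivial_iff_ne_bot _).mpr hne
  haveI := S.isPGroup'.center_nontrivial
  obtain ⟨z, hz⟩ := exists_ne (1 : (center (S : Subgroup G) : Subgroup (S : Subgroup G)))
  set g : G := ((z : (S : Subgroup G)) : G) with hg
  have hgS : g ∈ (S : Subgroup G) := (z : (S : Subgroup G)).2
  have hgC : g ∈ centralizer ((S : Subgroup G) : Set G) := by
    rw [mem_centralizer_iff]
    intro m hm
    exact congrArg Subtype.val ((Subgroup.mem_center_iff.mp z.2) ⟨m, hm⟩)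
  have hd1 : orderOf g ∣ Nat.card (S : Subgroup G) := by
    have := orderOf_dvd_natCard (⟨g, hgS⟩ : (S : Subgroup G))
    rwa [Subgroup.orderOf_mk] at this
  have hd2 : orderOf g ∣ Nat.card (centralizer ((S : Subgroup G) : Set G)) := by
    have := orderOf_dvd_natCard (⟨g, hgC⟩ : centralizer ((S : Subgroup G) : Set G))
    rwa [Subgroup.orderOf_mk] at this
  have cop : Nat.Coprime (Nat.card (S : Subgroup G))
      (Nat.card (centralizer ((S : Subgroup G) : Set G))) := by
    rw [hcard]
    exact Nat.Coprime.pow_left _ ((Nat.Prime.coprime_iff_not_dvd hp.out).mpr hnd)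
  have hone : orderOf g = 1 :=
    Nat.eq_one_of_dvd_coprimes cop hd1 hd2
  have : g = 1 := orderOf_eq_one_iff.mp hone
  exact hz (Subtype.ext (Subtype.ext this))

end CDaux

open CDaux

theorem at_most_one_sylow_cd_max
    (G : Type*) [Group G] [Finite G]
    (p q : ℕ) [Fact p.Prime] [Fact q.Prime]
    (S : Sylow p G) (T : Sylow q G)
    (hS : ∀ K : Subgroup G, cdMeasure K ≤ cdMeasure (S : Subgroup G))
    (hT : ∀ K : Subgroup G, cdMeasure K ≤ cdMeasure (T : Subgroup G)) :
    (S : Subgroup G) = (T : Subgroup G) := by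
  classical
  set Sg := (S : Subgroup G) with hSg
  set Tg := (T : Subgroup G) with hTg
  have hTS : cdMeasure Tg = cdMeasure Sg := le_antisymm (hS Tg) (hT Sg)
  set D := Sg ⊓ Tg with hD
  set J := Sg ⊔ Tg with hJ
  set A := Nat.card ((Sg : Set G) * (Tg : Set G)) with hA
  set B := Nat.card ((centralizer (Sg : Set G) : Set G) *
    (centralizer (Tg : Set G) : Set G)) with hB
  have e1 : Nat.card D * A = Nat.card Sg * Nat.card Tg := card_inf_mul_card_mul_set Sg Tg
  have e2 : Nat.card (centralizer (J : Set G)) * B =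
      Nat.card (centralizer (Sg : Set G)) * Nat.card (centralizer (Tg : Set G)) := by
    rw [hJ, centralizer_sup']
    exact card_inf_mul_card_mul_set _ _
  have prodEq : cdMeasure Sg * cdMeasure Tg =
      (Nat.card D * Nat.card (centralizer (J : Set G))) * (A * B) := by
    have h0 : cdMeasure Sg * cdMeasure Tg =
        (Nat.card Sg * Nat.card Tg) *
          (Nat.card (centralizer (Sg : Set G)) * Nat.card (centralizer (Tg : Set G))) := by
      unfold cdMeasure; ring
    rw [h0, ← e1, ← e2]; ring
  have hAle : A ≤ Nat.card J := by
    have hsub : (Sg : Set G) * (Tg : Set G) ⊆ (J : Set G) := by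
      rw [Set.mul_subset_iff]
      intro x hx y hy
      exact mul_mem (mem_sup_left hx) (mem_sup_right hy)
    have := Nat.card_mono (Set.toFinite (J : Set G)) hsub
    simpa [hA] using this
  have hBle : B ≤ Nat.card (centralizer (D : Set G)) := by
    have hsub : (centralizer (Sg : Set G) : Set G) * (centralizer (Tg : Set G) : Set G) ⊆
        ((centralizer (D : Set G) : Subgroup G) : Set G) := by
      rw [Set.mul_subset_iff]
      intro x hx y hy
      exact mul_mem (centralizer_le (SetLike.coe_subset_coe.mpr inf_le_left) hx)
        (centralizer_le (SetLike.coe_subset_coe.mpr inf_le_right) hy)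
    have := Nat.card_mono (Set.toFinite _) hsub
    simpa [hB] using this
  have mDJ : cdMeasure D * cdMeasure J =
      (Nat.card D * Nat.card (centralizer (J : Set G))) *
        (Nat.card J * Nat.card (centralizer (D : Set G))) := by
    unfold cdMeasure; ring
  have key : cdMeasure Sg * cdMeasure Tg ≤ cdMeasure D * cdMeasure J := by
    rw [prodEq, mDJ]
    exact Nat.mul_le_mul_left _ (Nat.mul_le_mul hAle hBle)
  have hup : cdMeasure D * cdMeasure J ≤ cdMeasure Sg * cdMeasure Tg := by
    calc cdMeasure D * cdMeasure J ≤ cdMeasure Sg * cdMeasure Sg :=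
          Nat.mul_le_mul (hS D) (hS J)
      _ = cdMeasure Sg * cdMeasure Tg := by rw [hTS]
  have main_eq : cdMeasure Sg * cdMeasure Tg = cdMeasure D * cdMeasure J :=
    le_antisymm key hup
  have c_pos : 0 < Nat.card D * Nat.card (centralizer (J : Set G)) :=
    Nat.mul_pos Nat.card_pos Nat.card_pos
  have hABeq : A * B = Nat.card J * Nat.card (centralizer (D : Set G)) := by
    have h1 : (Nat.card D * Nat.card (centralizer (J : Set G))) * (A * B) =
        (Nat.card D * Nat.card (centralizer (J : Set G))) *
          (Nat.card J * Nat.card (centralizer (D : Set G))) := by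
      rw [← prodEq, main_eq, mDJ]
    exact Nat.eq_of_mul_eq_mul_left c_pos h1
  obtain ⟨a, ha⟩ := IsPGroup.iff_card.mp S.isPGroup'
  obtain ⟨b, hb⟩ := IsPGroup.iff_card.mp T.isPGroup'
  rcases eq_or_ne p q with rfl | hpq
  · -- same prime: show the join is a p-group
    have hBpos : 0 < B := by
      have hmem : (1 : G) ∈ (centralizer (Sg : Set G) : Set G) *
          (centralizer (Tg : Set G) : Set G) := by
        rw [show (1:G) = 1 * 1 by simp]
        exact Set.mul_mem_mul (one_mem _) (one_mem _)
      have hne : ((centralizer (Sg : Set G) : Set G) *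
          (centralizer (Tg : Set G) : Set G)).Nonempty := ⟨1, hmem⟩
      haveI := hne.to_subtype
      exact Nat.card_pos
    have hJA : Nat.card J ≤ A := by
      have h2 : Nat.card J * Nat.card (centralizer (D : Set G)) ≤
          A * Nat.card (centralizer (D : Set G)) := by
        rw [← hABeq]
        exact Nat.mul_le_mul_left _ hBle
      exact Nat.le_of_mul_le_mul_right h2 Nat.card_pos
    have hAJ : A = Nat.card J := le_antisymm hAle hJA
    have hdvd : Nat.card J ∣ p ^ (a + b) := by
      refine ⟨Nat.card D, ?_⟩
      rw [pow_add, ← ha, ← hb, ← e1, hAJ]; ring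
    obtain ⟨n, _, hn⟩ := (Nat.dvd_prime_pow (Fact.out : p.Prime)).mp hdvd
    have hJp : IsPGroup p J := IsPGroup.of_card hn
    have hJS : J = Sg := S.is_maximal' hJp le_sup_left
    have hTle : Tg ≤ Sg := hJS ▸ (le_sup_right : Tg ≤ J)
    exact T.is_maximal' S.isPGroup' hTle
  · -- different primes
    have hDcard : Nat.card D = 1 := by
      have d1 : Nat.card D ∣ p ^ a := ha ▸ Subgroup.card_dvd_of_le inf_le_left
      have d2 : Nat.card D ∣ q ^ b := hb ▸ Subgroup.card_dvd_of_le inf_le_right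
      have cop : Nat.Coprime (p ^ a) (q ^ b) :=
        ((Nat.coprime_primes (Fact.out : p.Prime) (Fact.out : q.Prime)).mpr hpq).pow a b
      exact Nat.eq_one_of_dvd_coprimes cop d1 d2
    have hDbot : D = ⊥ := Subgroup.card_eq_one.mp hDcard
    have hgle : Nat.card G ≤ cdMeasure Sg := by
      rw [← cdMeasure_bot (G := G)]; exact hS ⊥
    have hle : cdMeasure Sg * cdMeasure Tg ≤ cdMeasure Sg * Nat.card G := by
      calc cdMeasure Sg * cdMeasure Tg ≤ cdMeasure D * cdMeasure J := key
        _ = Nat.card G * cdMeasure J := by rw [hDbot, cdMeasure_bot]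
        _ ≤ Nat.card G * cdMeasure Sg := Nat.mul_le_mul_left _ (hS J)
        _ = cdMeasure Sg * Nat.card G := by ring
    have hTle : cdMeasure Tg ≤ Nat.card G :=
      Nat.le_of_mul_le_mul_left hle (cdMeasure_pos Sg)
    have hSG : cdMeasure Sg = Nat.card G := le_antisymm (hTS ▸ hTle) hgle
    have hTG : cdMeasure Tg = Nat.card G := by rw [hTS]; exact hSG
    have hS0 : Sg = ⊥ := sylow_eq_bot S hSG
    have hT0 : Tg = ⊥ := sylow_eq_bot T hTG
    rw [hS0, hT0]
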